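/- arXiv:2512.11433 — 3 statements merged into one kernel-verified Lean document; each statement's English description precedes it below -/
import Mathlib

section
/- (Rearrangement-based optimality of Gradient-Input ordering for Deletion with zero baseline.) For a linear model f(x) = ⟨w, x⟩ + b, a permutation u of {1,...,d} minimizes the Deletion score ∑_{k=1}^d f(x with top-k coordinates under u zeroed) if and only if the sequence w_{u(1)} x_{u(1)} ≥ w_{u(2)} x_{u(2)} ≥ ... ≥ w_{u(d)} x_{u(d)} is nonincreasing. -/
/-- Deletion score with zero baseline for a linear model `y ↦ ⟨w, y⟩ + b`:
the `k`-th step evaluates the model on `x` with coordinates `u 0, …, u k` zeroed. -/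
def deletionScore (d : ℕ) (w x : Fin d → ℝ) (b : ℝ) (u : Equiv.Perm (Fin d)) : ℝ :=
  ∑ k : Fin d,
    ((∑ j, w j * (if ∃ i : Fin d, i ≤ k ∧ u i = j then 0 else x j)) + b)

lemma sum_ite_le_zero (d : ℕ) (m : Fin d) (c : ℝ) :
    (∑ k : Fin d, if m ≤ k then (0:ℝ) else c) = (m : ℕ) * c := by
  have : ∀ k : Fin d, (if m ≤ k then (0:ℝ) else c) = if k < m then c else 0 := by
    intro k
    by_cases h : m ≤ k
    · simp [h, not_lt.2 h]
    · simp [h, lt_of_not_ge h]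
  simp_rw [this]
  rw [Finset.sum_ite, Finset.sum_const, Finset.sum_const_zero, add_zero]
  have hfilt : Finset.univ.filter (fun k : Fin d => k < m) = Finset.Iio m := by
    ext k; simp
  rw [hfilt, Fin.card_Iio, nsmul_eq_mul]

lemma deletionScore_eq (d : ℕ) (w x : Fin d → ℝ) (b : ℝ) (v : Equiv.Perm (Fin d)) :
    deletionScore d w x b v = d * b + ∑ i : Fin d, (i : ℕ) * (w (v i) * x (v i)) := by
  unfold deletionScore
  have hcond : ∀ (k j : Fin d), (∃ i : Fin d, i ≤ k ∧ v i = j) ↔ v.symm j ≤ k := by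
    intro k j
    constructor
    · rintro ⟨i, hik, rfl⟩; simpa using hik
    · intro h; exact ⟨v.symm j, h, by simp⟩
  have h1 : ∀ k : Fin d,
      (∑ j, w j * (if ∃ i : Fin d, i ≤ k ∧ v i = j then 0 else x j))
        = ∑ j, (if v.symm j ≤ k then (0:ℝ) else w j * x j) := by
    intro k
    refine Finset.sum_congr rfl fun j _ => ?_
    by_cases h : v.symm j ≤ k
    · simp [h, (hcond k j).2 h]
    · have hne : ¬ ∃ i : Fin d, i ≤ k ∧ v i = j := fun hx => h ((hcond k j).1 hx)
      simp [h, hne]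
  simp_rw [h1, Finset.sum_add_distrib, Finset.sum_const, Finset.card_univ, Fintype.card_fin,
    nsmul_eq_mul]
  rw [Finset.sum_comm, add_comm]
  congr 1
  have h2 : ∀ j : Fin d,
      (∑ k : Fin d, if v.symm j ≤ k then (0:ℝ) else w j * x j)
        = ((v.symm j : ℕ) : ℝ) * (w j * x j) := fun j => sum_ite_le_zero d _ _
  simp_rw [h2]
  rw [← Equiv.sum_comp v (fun j => ((v.symm j : ℕ) : ℝ) * (w j * x j))]
  simp

/-- Rearrangement-based optimality of the Gradient-Input ordering for Deletion with
zero baseline: assuming the values `w j * x j` are pairwise distinct, a permutation `u`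
minimizes the Deletion score over all permutations if and only if the sequence
`w (u 0) * x (u 0) ≥ w (u 1) * x (u 1) ≥ …` is nonincreasing. -/
theorem deletion_min_iff_gradient_input_order (d : ℕ) (w x : Fin d → ℝ) (b : ℝ)
    (hdist : ∀ i j : Fin d, i ≠ j → w i * x i ≠ w j * x j)
    (u : Equiv.Perm (Fin d)) :
    (∀ v : Equiv.Perm (Fin d), deletionScore d w x b u ≤ deletionScore d w x b v) ↔
      (∀ i j : Fin d, i ≤ j → w (u j) * x (u j) ≤ w (u i) * x (u i)) := by
  set g : Fin d → ℝ := fun j => w j * x j with hg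
  set c : Fin d → ℝ := fun i => ((i : ℕ) : ℝ) with hc
  -- reduce to the weighted sums
  have hscore : ∀ v : Equiv.Perm (Fin d),
      deletionScore d w x b v = d * b + ∑ i : Fin d, c i * g (v i) := by
    intro v; exact deletionScore_eq d w x b v
  have hmin_iff : (∀ v : Equiv.Perm (Fin d),
        deletionScore d w x b u ≤ deletionScore d w x b v) ↔
      (∀ v : Equiv.Perm (Fin d), ∑ i, c i * g (u i) ≤ ∑ i, c i * g (v i)) := by
    constructor
    · intro h v
      have := h v
      rw [hscore u, hscore v] at this
      linarith
    · intro h v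
      rw [hscore u, hscore v]
      linarith [h v]
  rw [hmin_iff]
  have hcmono : ∀ i j : Fin d, c j ≤ c i → j ≤ i := by
    intro i j h
    simp only [hc, Nat.cast_le] at h
    exact h
  have hcmono' : ∀ i j : Fin d, i ≤ j → c i ≤ c j := by
    intro i j h
    simp only [hc, Nat.cast_le]
    exact h
  constructor
  · -- minimality → nonincreasing
    intro hmin
    -- the sorting permutation
    set σ₀ : Equiv.Perm (Fin d) := Tuple.sort (fun i => -(g i)) with hσ₀
    have hmono : Monotone ((fun i => -(g i)) ∘ σ₀) := Tuple.monotone_sort _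
    have hanti : ∀ i j : Fin d, i ≤ j → g (σ₀ j) ≤ g (σ₀ i) := by
      intro i j hij
      have := hmono hij
      simp only [Function.comp_apply] at this
      linarith
    have hantivary : Antivary c (g ∘ σ₀) := by
      intro i j hlt
      simp only [Function.comp_apply] at hlt
      have hji : j ≤ i := by
        by_contra h
        push_neg at h
        exact absurd (hanti i j h.le) (not_le.2 hlt)
      exact hcmono' j i hji
    set τ : Equiv.Perm (Fin d) := σ₀⁻¹ * u with hτ
    have huστ : ∀ i, σ₀ (τ i) = u i := by intro i; simp [hτ]
    -- u achieves at most the sorted value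
    have hle : ∑ i, c i * g (u i) ≤ ∑ i, c i * g (σ₀ i) := hmin σ₀
    have hge : ∑ i, c i * g (σ₀ i) ≤ ∑ i, c i * g (u i) := by
      have := hantivary.sum_mul_le_sum_mul_comp_perm (σ := τ)
      simp only [Function.comp_apply] at this
      simpa [huστ] using this
    have heq : ∑ i, c i * ((g ∘ σ₀) (τ i)) = ∑ i, c i * ((g ∘ σ₀) i) := by
      simp only [Function.comp_apply, huστ]
      exact le_antisymm hle hge
    have hantivary' : Antivary c ((g ∘ σ₀) ∘ τ) :=
      (hantivary.sum_mul_eq_sum_mul_comp_perm_iff (σ := τ)).1 heq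
    have hAu : Antivary c (g ∘ u) := by
      have : (g ∘ σ₀) ∘ τ = g ∘ u := by
        funext i; simp [huστ i]
      rwa [this] at hantivary'
    intro i j hij
    by_contra h
    push_neg at h
    have hji : j ≤ i := hcmono i j (hAu (show (g ∘ ⇑u) i < (g ∘ ⇑u) j from h))
    have heq : i = j := le_antisymm hij hji
    rw [heq] at h
    exact lt_irrefl _ h
  · -- nonincreasing → minimality
    intro hanti
    have hAu : Antivary c (g ∘ u) := by
      intro i j hlt
      simp only [Function.comp_apply] at hlt
      have hji : j ≤ i := by
        by_contra h
        push_neg at h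
        exact absurd (hanti i j h.le) (not_le.2 hlt)
      exact hcmono' j i hji
    intro v
    set τ : Equiv.Perm (Fin d) := u⁻¹ * v with hτ
    have hvστ : ∀ i, u (τ i) = v i := by intro i; simp [hτ]
    have := hAu.sum_mul_le_sum_mul_comp_perm (σ := τ)
    simp only [Function.comp_apply] at this
    simpa [hvστ] using this
end

section
/- For a linear model f(x) = ⟨w, x⟩ + b with additive uniform-noise baseline, the expected Deletion score of a permutation u equals d·(⟨w,x⟩ + b) + ∑_{i=1}^d (d − i + 1) * (1/2) * w_{u(i)}, where the k-th deletion step adds an independent Uniform[0,1] noise variable to each of the coordinates u(1),...,u(k). -/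
open MeasureTheory

/-- The i.i.d. Uniform[0,1] law on `ℝ^d`. -/
noncomputable def uniformNoise (d : ℕ) : Measure (Fin d → ℝ) :=
  Measure.pi fun _ => volume.restrict (Set.Icc (0 : ℝ) 1)

instance : IsProbabilityMeasure (volume.restrict (Set.Icc (0 : ℝ) 1)) :=
  ⟨by simp [Real.volume_Icc]⟩

instance (d : ℕ) : IsProbabilityMeasure (uniformNoise d) :=
  MeasureTheory.Measure.pi.instIsProbabilityMeasure _

lemma map_eval_uniform (d : ℕ) (j : Fin d) :
    (uniformNoise d).map (fun ξ => ξ j) = volume.restrict (Set.Icc (0 : ℝ) 1) := by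
  ext s hs
  rw [Measure.map_apply (measurable_pi_apply j) hs]
  have hpre : (fun ξ : Fin d → ℝ => ξ j) ⁻¹' s
      = Set.pi Set.univ (Function.update (fun _ : Fin d => (Set.univ : Set ℝ)) j s) := by
    ext ξ
    simp only [Set.mem_preimage, Set.mem_pi, Set.mem_univ, true_implies]
    constructor
    · intro h i
      rcases eq_or_ne i j with rfl | hij
      · simpa using h
      · simp [Function.update_of_ne hij]
    · intro h; have := h j; simpa using this
  rw [hpre, uniformNoise, Measure.pi_pi]
  rw [Finset.prod_eq_single j]
  · simp
  · intro i _ hij; simp [Function.update_of_ne hij]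
  · simp

lemma integral_eval_uniform (d : ℕ) (j : Fin d) :
    ∫ ξ, ξ j ∂(uniformNoise d) = 1 / 2 := by
  have : ∫ ξ, ξ j ∂(uniformNoise d) = ∫ y, y ∂((uniformNoise d).map (fun ξ => ξ j)) := by
    rw [integral_map (measurable_pi_apply j).aemeasurable]
    exact measurable_id.aestronglyMeasurable
  rw [this, map_eval_uniform]
  have h1 : ∫ y in Set.Icc (0:ℝ) 1, y = ∫ y in (0:ℝ)..1, y := by
    rw [integral_Icc_eq_integral_Ioc, intervalIntegral.integral_of_le (by norm_num)]
  rw [h1, integral_id]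
  norm_num

lemma integrable_eval_uniform (d : ℕ) (j : Fin d) :
    Integrable (fun ξ : Fin d → ℝ => ξ j) (uniformNoise d) := by
  have : Integrable id ((uniformNoise d).map (fun ξ => ξ j)) := by
    rw [map_eval_uniform]
    exact continuous_id.integrableOn_Icc
  exact (integrable_map_measure measurable_id.aestronglyMeasurable
    (measurable_pi_apply j).aemeasurable).mp this

/-- Expected Deletion score with additive uniform-noise baseline: for a linear model
`f(y) = ⟨w, y⟩ + b`, where the `k`-th deletion step adds independent Uniform[0,1] noise
to each of the coordinates `u 0, …, u k`, the expected Deletion score of a permutation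
`u` equals `d·(⟨w,x⟩ + b) + ∑_{i=1}^d (d − i + 1) * (1/2) * w_{u(i)}` (written here with
0-based indices, so the coefficient of `w (u i)` is `d − i`). -/
theorem expected_deletion_uniform_noise (d : ℕ) (w x : Fin d → ℝ) (b : ℝ)
    (u : Equiv.Perm (Fin d)) :
    (∫ ξ, ∑ k : Fin d,
        ((∑ j, w j * (if ∃ i : Fin d, i ≤ k ∧ u i = j then x j + ξ j else x j)) + b)
        ∂(uniformNoise d)) =
      d * ((∑ j, w j * x j) + b) +
        ∑ i : Fin d, ((d - (i : ℕ) : ℕ) : ℝ) * (1 / 2) * w (u i) := by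
  have hcond : ∀ (k j : Fin d), (∃ i : Fin d, i ≤ k ∧ u i = j) ↔ u.symm j ≤ k := by
    intro k j
    constructor
    · rintro ⟨i, hik, rfl⟩; simpa using hik
    · intro h; exact ⟨u.symm j, h, by simp⟩
  have key : ∀ ξ : Fin d → ℝ,
      (∑ k : Fin d,
        ((∑ j, w j * (if ∃ i : Fin d, i ≤ k ∧ u i = j then x j + ξ j else x j)) + b))
      = d * ((∑ j, w j * x j) + b)
        + ∑ j : Fin d, ((d - (u.symm j : ℕ) : ℕ) : ℝ) * w j * ξ j := by
    intro ξ
    have step1 : ∀ (k j : Fin d),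
        w j * (if ∃ i : Fin d, i ≤ k ∧ u i = j then x j + ξ j else x j)
        = w j * x j + (if u.symm j ≤ k then w j * ξ j else 0) := by
      intro k j
      rw [if_congr (hcond k j) rfl rfl]
      split_ifs <;> ring
    simp_rw [step1, Finset.sum_add_distrib]
    rw [Finset.sum_comm (f := fun k j => if u.symm j ≤ k then w j * ξ j else 0)]
    have hcount : ∀ j : Fin d,
        ∑ k : Fin d, (if u.symm j ≤ k then w j * ξ j else 0)
        = ((d - (u.symm j : ℕ) : ℕ) : ℝ) * w j * ξ j := by
      intro j
      rw [← Finset.sum_filter]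
      have : Finset.univ.filter (fun k => u.symm j ≤ k) = Finset.Ici (u.symm j) := by
        ext k; simp
      rw [this, Finset.sum_const, Fin.card_Ici]
      ring
    simp_rw [hcount]
    rw [Finset.sum_const, Finset.sum_const, Finset.card_univ, Fintype.card_fin]
    ring
  simp_rw [key]
  have hint : Integrable
      (fun ξ : Fin d → ℝ => ∑ j : Fin d, ((d - (u.symm j : ℕ) : ℕ) : ℝ) * w j * ξ j)
      (uniformNoise d) := by
    apply integrable_finset_sum
    intro j _
    exact (integrable_eval_uniform d j).const_mul _
  rw [integral_add (integrable_const _) hint, integral_const, integral_finset_sum _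
    (fun j _ => (integrable_eval_uniform d j).const_mul _)]
  simp_rw [integral_const_mul, integral_eval_uniform]
  have hre : ∑ j : Fin d, ((d - (u.symm j : ℕ) : ℕ) : ℝ) * w j * (1/2)
      = ∑ i : Fin d, ((d - (i : ℕ) : ℕ) : ℝ) * (1 / 2) * w (u i) := by
    rw [← Equiv.sum_comp u (fun j => ((d - (u.symm j : ℕ) : ℕ) : ℝ) * w j * (1/2))]
    refine Finset.sum_congr rfl fun i _ => ?_
    rw [Equiv.symm_apply_apply]
    ring
  rw [← hre]
  simp
end

section
/- (Optimal orderings coincide for Insertion and Deletion with zero baseline.) For a linear model f(x) = ⟨w, x⟩ + b, a permutation u minimizes the Deletion score with zero baseline if and only if it maximizes the Insertion score with zero baseline. -/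
/-- Insertion score with zero baseline for the linear model `y ↦ ⟨w, y⟩ + b`:
the `k`-th step keeps only the coordinates `u 0, …, u k` of `x`. -/
def insertionScore (d : ℕ) (w x : Fin d → ℝ) (b : ℝ) (u : Equiv.Perm (Fin d)) : ℝ :=
  ∑ k : Fin d,
    ((∑ j, w j * (if ∃ i : Fin d, i ≤ k ∧ u i = j then x j else 0)) + b)

lemma del_add_ins (d : ℕ) (w x : Fin d → ℝ) (b : ℝ) (u : Equiv.Perm (Fin d)) :
    deletionScore d w x b u + insertionScore d w x b u
      = ∑ k : Fin d, ((∑ j, w j * x j) + 2 * b) := by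
  unfold deletionScore insertionScore
  rw [← Finset.sum_add_distrib]
  refine Finset.sum_congr rfl fun k _ => ?_
  rw [show ∀ a c : ℝ, (a + b) + (c + b) = (a + c) + 2 * b by intros; ring]
  congr 1
  rw [← Finset.sum_add_distrib]
  refine Finset.sum_congr rfl fun j _ => ?_
  by_cases h : ∃ i : Fin d, i ≤ k ∧ u i = j <;> simp [h]

/-- Optimal orderings coincide for Insertion and Deletion with zero baseline: for a
linear model, a permutation `u` minimizes the Deletion score if and only if it
maximizes the Insertion score. -/
theorem deletion_min_iff_insertion_max (d : ℕ) (w x : Fin d → ℝ) (b : ℝ)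
    (u : Equiv.Perm (Fin d)) :
    (∀ v : Equiv.Perm (Fin d), deletionScore d w x b u ≤ deletionScore d w x b v) ↔
      (∀ v : Equiv.Perm (Fin d),
        insertionScore d w x b v ≤ insertionScore d w x b u) := by
  constructor <;> intro h v <;> have h1 := del_add_ins d w x b u <;>
    have h2 := del_add_ins d w x b v <;> have := h v <;> linarith
end
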